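/- Let F be a continuous distribution function on ℝ with F ∈ MDA(H_{ξ,μ,σ}), where H_{ξ,μ,σ} is a GEV distribution function, with normalizing sequences (c*_n), c*_n > 0, and (d*_n). For each n ∈ ℕ let δ_n be an n-variate copula diagonal, and suppose there exists r : ℕ → (0,∞) with r_n → ∞ such that D_n^r(u) = δ_n(u^{1/r_n}) converges pointwise on [0,1] to a continuous function D. If there exist sequences (c_n), c_n > 0, and (d_n) and a nondegenerate distribution function G on ℝ such that δ_n(F(c_n x + d_n)) → G(x) as n → ∞ at every continuity point x of G, then there exist c > 0 and d ∈ ℝ such that G = D ∘ H_{ξ,μ̃,σ̃} with μ̃ = (μ − d)/c and σ̃ = σ/c. (Corollary: generalized Fisher–Tippett–Gnedenko theorem.) -/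

import Mathlib

open Filter Set Topology

/-- The generalized extreme value (GEV) distribution function `H_{ξ,μ,σ}`. -/
noncomputable def GEVcdf (ξ μ σ : ℝ) : ℝ → ℝ := fun x =>
  if ξ = 0 then Real.exp (-Real.exp (-(x - μ) / σ))
  else if 0 < 1 + ξ * (x - μ) / σ then Real.exp (-(1 + ξ * (x - μ) / σ) ^ (-1 / ξ))
  else if 0 < ξ then 0 else 1

/-- A distribution function is GEV if it equals some `H_{ξ,μ,σ}` with `σ > 0`. -/
def IsGEV (H : ℝ → ℝ) : Prop := ∃ ξ μ σ : ℝ, 0 < σ ∧ H = GEVcdf ξ μ σ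

/-- A distribution function on `ℝ`: nondecreasing, right-continuous, with limits 0 at `-∞`
and 1 at `∞`, taking values in `[0,1]`. -/
def IsDistFun (F : ℝ → ℝ) : Prop :=
  Monotone F ∧ (∀ x, ContinuousWithinAt F (Ici x) x) ∧
    Tendsto F atBot (nhds 0) ∧ Tendsto F atTop (nhds 1) ∧ ∀ x, F x ∈ Icc (0:ℝ) 1

/-- The properties of the diagonal `u ↦ C_n(u,…,u)` of an `n`-dimensional copula. -/
def IsCopulaDiagonal (n : ℕ) (δ : ℝ → ℝ) : Prop :=
  δ 0 = 0 ∧ δ 1 = 1 ∧ MonotoneOn δ (Icc 0 1) ∧ (∀ u ∈ Icc (0:ℝ) 1, δ u ≤ u) ∧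
    ∀ u ∈ Icc (0:ℝ) 1, ∀ v ∈ Icc (0:ℝ) 1, |δ u - δ v| ≤ (n : ℝ) * |u - v|

/-- A distribution function on `[0,1]`: nondecreasing, right-continuous, `D(0)=0`, `D(1)=1`,
with values in `[0,1]`. -/
def IsDistFun01 (D : ℝ → ℝ) : Prop :=
  D 0 = 0 ∧ D 1 = 1 ∧ MonotoneOn D (Icc 0 1) ∧
    (∀ u ∈ Ico (0:ℝ) 1, ContinuousWithinAt D (Icc u 1) u) ∧
    ∀ u ∈ Icc (0:ℝ) 1, D u ∈ Icc (0:ℝ) 1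

/-- A degenerate distribution function `x ↦ 1_{[a,∞)}(x)`. -/
noncomputable def IsDegenerateDF (G : ℝ → ℝ) : Prop :=
  ∃ a : ℝ, ∀ x, G x = if a ≤ x then 1 else 0

/-- An Archimedean generator: continuous on `[0,∞)`, `ψ(0)=1`, values in `[0,1]`,
`ψ(t) → 0` as `t → ∞`, strictly decreasing on `[0, inf{x : ψ(x)=0}]` (equivalently,
strictly decreasing as long as it is positive). -/
def IsArchimedeanGenerator (ψ : ℝ → ℝ) : Prop :=
  ContinuousOn ψ (Ici 0) ∧ ψ 0 = 1 ∧ (∀ t ∈ Ici (0:ℝ), ψ t ∈ Icc (0:ℝ) 1) ∧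
    Tendsto ψ atTop (nhds 0) ∧
    ∀ s t : ℝ, 0 ≤ s → s < t → 0 < ψ s → ψ t < ψ s

private lemma lemA {f : ℕ → ℝ → ℝ} {g : ℝ → ℝ} {w : ℕ → ℝ} {l : ℝ}
    (hmono : ∀ n, Monotone (f n))
    (hfg : ∀ x, Tendsto (fun n => f n x) atTop (nhds (g x)))
    (hgc : ContinuousAt g l) (hw : Tendsto w atTop (nhds l)) :
    Tendsto (fun n => f n (w n)) atTop (nhds (g l)) := by
  rw [Metric.tendsto_nhds]
  intro ε hε
  obtain ⟨dlt, hdlt, hcont⟩ := Metric.continuousAt_iff.1 hgc (ε/3) (by linarith)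
  have hd' : ∀ y : ℝ, |y - l| ≤ dlt/2 → |g y - g l| < ε/3 := by
    intro y hy
    have : dist y l < dlt := by rw [Real.dist_eq]; linarith
    have := hcont this
    rwa [Real.dist_eq] at this
  have h1 : ∀ᶠ n in atTop, |w n - l| < dlt/2 := by
    have := Metric.tendsto_nhds.1 hw (dlt/2) (by linarith)
    simpa [Real.dist_eq] using this
  have h2 := Metric.tendsto_nhds.1 (hfg (l - dlt/2)) (ε/3) (by linarith)
  have h3 := Metric.tendsto_nhds.1 (hfg (l + dlt/2)) (ε/3) (by linarith)
  filter_upwards [h1, h2, h3] with n hn1 hn2 hn3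
  rw [Real.dist_eq] at hn2 hn3 ⊢
  obtain ⟨hn1a, hn1b⟩ := abs_lt.1 hn1
  have hb1 : f n (l - dlt/2) ≤ f n (w n) := hmono n (by linarith)
  have hb2 : f n (w n) ≤ f n (l + dlt/2) := hmono n (by linarith)
  have hg1 : |g (l - dlt/2) - g l| < ε/3 := hd' _ (by rw [abs_le]; constructor <;> linarith)
  have hg2 : |g (l + dlt/2) - g l| < ε/3 := hd' _ (by rw [abs_le]; constructor <;> linarith)
  obtain ⟨A1, A2⟩ := abs_lt.1 hn2
  obtain ⟨B1, B2⟩ := abs_lt.1 hn3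
  obtain ⟨C1, C2⟩ := abs_lt.1 hg1
  obtain ⟨D1, D2⟩ := abs_lt.1 hg2
  rw [abs_lt]; constructor <;> linarith

private lemma gev_mem_Icc (ξ μ σ : ℝ) (x : ℝ) : GEVcdf ξ μ σ x ∈ Icc (0:ℝ) 1 := by
  unfold GEVcdf
  split_ifs with h1 h2 h3
  · exact ⟨(Real.exp_pos _).le, Real.exp_le_one_iff.2 (by simp [(Real.exp_pos _).le])⟩
  · exact ⟨(Real.exp_pos _).le, Real.exp_le_one_iff.2 (by
      simp only [neg_nonpos]
      exact Real.rpow_nonneg h2.le _)⟩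
  · exact ⟨le_refl 0, zero_le_one⟩
  · exact ⟨zero_le_one, le_refl 1⟩

private lemma gev_slope {ξ : ℝ} (μ σ : ℝ) (hξ : ξ ≠ 0) (hσ : σ ≠ 0) (x : ℝ) :
    1 + ξ * (x - μ) / σ = (ξ / σ) * (x - (μ - σ / ξ)) := by
  field_simp; ring

-- tendsto of t ↦ t^(-1/ξ) for ξ > 0, as t → 0+
private lemma rpow_tendsto_zero_right {ξ : ℝ} (hξ : 0 < ξ) :
    Tendsto (fun t : ℝ => t ^ (-1 / ξ)) (nhdsWithin 0 (Ioi 0)) atTop := by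
  have h1 : Tendsto (fun t : ℝ => (t⁻¹) ^ (1 / ξ)) (nhdsWithin 0 (Ioi 0)) atTop :=
    (tendsto_rpow_atTop (by positivity)).comp tendsto_inv_nhdsGT_zero
  apply h1.congr'
  filter_upwards [self_mem_nhdsWithin] with t (ht : t ∈ Ioi 0)
  rw [Real.inv_rpow (le_of_lt ht), ← Real.rpow_neg (le_of_lt ht), neg_div]

private lemma gev_continuous {ξ μ σ : ℝ} (hσ : 0 < σ) : Continuous (GEVcdf ξ μ σ) := by
  rcases lt_trichotomy ξ 0 with hξ | hξ | hξ
  · -- ξ < 0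
    have hξ' : ξ ≠ 0 := ne_of_lt hξ
    have key : ∀ x, GEVcdf ξ μ σ x =
        if 0 < 1 + ξ * (x - μ) / σ then Real.exp (-(1 + ξ * (x - μ) / σ) ^ (-1 / ξ)) else 1 := by
      intro x; simp [GEVcdf, hξ', not_lt.2 hξ.le]
    set x₀ := μ - σ / ξ with hx₀
    have hslope : ∀ x, 1 + ξ * (x - μ) / σ = (ξ / σ) * (x - x₀) := gev_slope μ σ hξ' hσ.ne'
    have hsneg : ξ / σ < 0 := div_neg_of_neg_of_pos hξ hσ
    have hpos : ∀ x, x < x₀ → 0 < 1 + ξ * (x - μ) / σ := by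
      intro x hx; rw [hslope]; exact mul_pos_of_neg_of_neg hsneg (by linarith)
    have hneg : ∀ x, x₀ ≤ x → ¬ (0 < 1 + ξ * (x - μ) / σ) := by
      intro x hx; rw [hslope, not_lt]
      exact mul_nonpos_of_nonpos_of_nonneg hsneg.le (by linarith)
    have hg : Continuous fun x : ℝ => 1 + ξ * (x - μ) / σ := by fun_prop
    rw [continuous_iff_continuousAt]
    intro x
    rcases lt_trichotomy x x₀ with h | h | h
    · have hev : ∀ᶠ y in nhds x, GEVcdf ξ μ σ y =
          Real.exp (-(1 + ξ * (y - μ) / σ) ^ (-1 / ξ)) := by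
        filter_upwards [Iio_mem_nhds h] with y (hy : y < x₀)
        rw [key, if_pos (hpos y hy)]
      apply ContinuousAt.congr _ (Filter.EventuallyEq.symm hev)
      exact ((hg.continuousAt.rpow_const (Or.inl (ne_of_gt (hpos x h)))).neg).rexp
    · -- x = x₀
      have hval : GEVcdf ξ μ σ x = 1 := by rw [key, if_neg (hneg x h.ge)]
      rw [ContinuousAt, hval, ← nhdsLT_sup_nhdsGE x, tendsto_sup]
      constructor
      · -- from the left: exp(-(g y)^(-1/ξ)) → exp 0 = 1
        have hgt : Tendsto (fun y => 1 + ξ * (y - μ) / σ) (nhdsWithin x (Iio x)) (nhdsWithin 0 (Ioi 0)) := by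
          rw [tendsto_nhdsWithin_iff]
          constructor
          · have := hg.continuousAt (x := x)
            rw [ContinuousAt] at this
            have hgx : 1 + ξ * (x - μ) / σ = 0 := by rw [hslope, h]; ring
            rw [hgx] at this
            exact this.mono_left nhdsWithin_le_nhds
          · filter_upwards [self_mem_nhdsWithin] with y (hy : y < x)
            exact hpos y (h ▸ hy)
        have hr : Tendsto (fun t : ℝ => t ^ (-1 / ξ)) (nhdsWithin 0 (Ioi 0)) (nhds 0) := by
          have hc : ContinuousAt (fun t : ℝ => t ^ (-1 / ξ)) 0 :=
            Real.continuousAt_rpow_const 0 _ (Or.inr (by rw [neg_div]; exact (neg_pos.2 (one_div_neg.2 hξ)).le))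
          rw [ContinuousAt, Real.zero_rpow (by rw [neg_div]; exact neg_pos.2 (one_div_neg.2 hξ) : (0:ℝ) < -1/ξ).ne'] at hc
          exact hc.mono_left nhdsWithin_le_nhds
        have hexp : Tendsto (fun s : ℝ => Real.exp (-s)) (nhds 0) (nhds 1) := by
          have : ContinuousAt (fun s : ℝ => Real.exp (-s)) 0 := by fun_prop
          rw [ContinuousAt, neg_zero, Real.exp_zero] at this; exact this
        have := hexp.comp (hr.comp hgt)
        apply this.congr'
        filter_upwards [self_mem_nhdsWithin] with y (hy : y < x)
        simp only [Function.comp]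
        rw [key, if_pos (hpos y (h ▸ hy))]
      · -- from the right: constant 1
        apply Tendsto.congr' _ tendsto_const_nhds
        filter_upwards [self_mem_nhdsWithin] with y (hy : x ≤ y)
        rw [key, if_neg (hneg y (h ▸ hy))]
    · have hev : ∀ᶠ y in nhds x, GEVcdf ξ μ σ y = 1 := by
        filter_upwards [Ioi_mem_nhds h] with y (hy : x₀ < y)
        rw [key, if_neg (hneg y hy.le)]
      exact ContinuousAt.congr continuousAt_const (Filter.EventuallyEq.symm hev)
  · -- ξ = 0
    subst hξ
    have : GEVcdf 0 μ σ = fun x => Real.exp (-Real.exp (-(x - μ) / σ)) := by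
      funext x; simp [GEVcdf]
    rw [this]; fun_prop
  · -- ξ > 0
    have hξ' : ξ ≠ 0 := ne_of_gt hξ
    have key : ∀ x, GEVcdf ξ μ σ x =
        if 0 < 1 + ξ * (x - μ) / σ then Real.exp (-(1 + ξ * (x - μ) / σ) ^ (-1 / ξ)) else 0 := by
      intro x; simp [GEVcdf, hξ', hξ]
    set x₀ := μ - σ / ξ with hx₀
    have hslope : ∀ x, 1 + ξ * (x - μ) / σ = (ξ / σ) * (x - x₀) := gev_slope μ σ hξ' hσ.ne'
    have hspos : 0 < ξ / σ := div_pos hξ hσ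
    have hpos : ∀ x, x₀ < x → 0 < 1 + ξ * (x - μ) / σ := by
      intro x hx; rw [hslope]; exact mul_pos hspos (by linarith)
    have hneg : ∀ x, x ≤ x₀ → ¬ (0 < 1 + ξ * (x - μ) / σ) := by
      intro x hx; rw [hslope, not_lt]
      exact mul_nonpos_of_nonneg_of_nonpos hspos.le (by linarith)
    have hg : Continuous fun x : ℝ => 1 + ξ * (x - μ) / σ := by fun_prop
    rw [continuous_iff_continuousAt]
    intro x
    rcases lt_trichotomy x x₀ with h | h | h
    · have hev : ∀ᶠ y in nhds x, GEVcdf ξ μ σ y = 0 := by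
        filter_upwards [Iio_mem_nhds h] with y (hy : y < x₀)
        rw [key, if_neg (hneg y hy.le)]
      exact ContinuousAt.congr continuousAt_const (Filter.EventuallyEq.symm hev)
    · -- x = x₀
      have hval : GEVcdf ξ μ σ x = 0 := by rw [key, if_neg (hneg x h.le)]
      rw [ContinuousAt, hval, ← nhdsLE_sup_nhdsGT x, tendsto_sup]
      constructor
      · apply Tendsto.congr' _ tendsto_const_nhds
        filter_upwards [self_mem_nhdsWithin] with y (hy : y ≤ x)
        rw [key, if_neg (hneg y (h ▸ hy))]
      · have hgt : Tendsto (fun y => 1 + ξ * (y - μ) / σ) (nhdsWithin x (Ioi x)) (nhdsWithin 0 (Ioi 0)) := by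
          rw [tendsto_nhdsWithin_iff]
          constructor
          · have := hg.continuousAt (x := x)
            rw [ContinuousAt] at this
            have hgx : 1 + ξ * (x - μ) / σ = 0 := by rw [hslope, h]; ring
            rw [hgx] at this
            exact this.mono_left nhdsWithin_le_nhds
          · filter_upwards [self_mem_nhdsWithin] with y (hy : x < y)
            exact hpos y (h ▸ hy)
        have hcomp : Tendsto (fun y => Real.exp (-(1 + ξ * (y - μ) / σ) ^ (-1 / ξ)))
            (nhdsWithin x (Ioi x)) (nhds 0) :=
          (Real.tendsto_exp_atBot.comp (tendsto_neg_atTop_atBot.comp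
            ((rpow_tendsto_zero_right hξ).comp hgt)))
        apply hcomp.congr'
        filter_upwards [self_mem_nhdsWithin] with y (hy : x < y)
        rw [key, if_pos (hpos y (h ▸ hy))]
    · have hev : ∀ᶠ y in nhds x, GEVcdf ξ μ σ y =
          Real.exp (-(1 + ξ * (y - μ) / σ) ^ (-1 / ξ)) := by
        filter_upwards [Ioi_mem_nhds h] with y (hy : x₀ < y)
        rw [key, if_pos (hpos y hy)]
      apply ContinuousAt.congr _ (Filter.EventuallyEq.symm hev)
      exact ((hg.continuousAt.rpow_const (Or.inl (ne_of_gt (hpos x h)))).neg).rexp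

private lemma gev_tendsto_atBot {ξ μ σ : ℝ} (hσ : 0 < σ) :
    Tendsto (GEVcdf ξ μ σ) atBot (nhds 0) := by
  rcases lt_trichotomy ξ 0 with hξ | hξ | hξ
  · -- ξ < 0 : on x < x₀, H x = exp(-(g x)^(-1/ξ)), g → atTop, exponent -1/ξ > 0
    have hξ' : ξ ≠ 0 := ne_of_lt hξ
    set x₀ := μ - σ / ξ with hx₀
    have hslope : ∀ x, 1 + ξ * (x - μ) / σ = (ξ / σ) * (x - x₀) := gev_slope μ σ hξ' hσ.ne'
    have hsneg : ξ / σ < 0 := div_neg_of_neg_of_pos hξ hσ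
    have hgtop : Tendsto (fun x : ℝ => 1 + ξ * (x - μ) / σ) atBot atTop := by
      apply Tendsto.congr (fun x => (hslope x).symm)
      exact (tendsto_atBot_add_const_right _ (-x₀) tendsto_id).const_mul_atBot_of_neg hsneg
    have hepos : (0:ℝ) < -1/ξ := by rw [neg_div]; exact neg_pos.2 (one_div_neg.2 hξ)
    have hmain : Tendsto (fun x : ℝ => Real.exp (-(1 + ξ * (x - μ) / σ) ^ (-1 / ξ)))
        atBot (nhds 0) :=
      Real.tendsto_exp_atBot.comp (tendsto_neg_atTop_atBot.comp
        ((tendsto_rpow_atTop hepos).comp hgtop))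
    apply hmain.congr'
    filter_upwards [eventually_lt_atBot x₀] with x (hx : x < x₀)
    have hpos : 0 < 1 + ξ * (x - μ) / σ := by
      rw [hslope]; exact mul_pos_of_neg_of_neg hsneg (by linarith)
    simp only [GEVcdf, hξ', if_neg hξ', if_pos hpos, if_false]
  · subst hξ
    have h1 : Tendsto (fun x : ℝ => -(x - μ) / σ) atBot atTop := by
      apply Tendsto.atTop_div_const hσ
      exact tendsto_neg_atBot_atTop.comp (tendsto_atBot_add_const_right _ (-μ) tendsto_id)
    have hmain : Tendsto (fun x : ℝ => Real.exp (-Real.exp (-(x - μ) / σ))) atBot (nhds 0) :=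
      Real.tendsto_exp_atBot.comp (tendsto_neg_atTop_atBot.comp (Real.tendsto_exp_atTop.comp h1))
    apply hmain.congr
    intro x; simp [GEVcdf]
  · -- ξ > 0 : eventually 0
    have hξ' : ξ ≠ 0 := ne_of_gt hξ
    set x₀ := μ - σ / ξ with hx₀
    have hslope : ∀ x, 1 + ξ * (x - μ) / σ = (ξ / σ) * (x - x₀) := gev_slope μ σ hξ' hσ.ne'
    apply Tendsto.congr' _ tendsto_const_nhds
    filter_upwards [eventually_lt_atBot x₀] with x (hx : x < x₀)
    have hneg : ¬ (0 < 1 + ξ * (x - μ) / σ) := by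
      rw [hslope, not_lt]
      exact mul_nonpos_of_nonneg_of_nonpos (div_pos hξ hσ).le (by linarith)
    simp [GEVcdf, hξ', hξ, if_neg hneg]

private lemma gev_tendsto_atTop {ξ μ σ : ℝ} (hσ : 0 < σ) :
    Tendsto (GEVcdf ξ μ σ) atTop (nhds 1) := by
  have hexp1 : Tendsto (fun s : ℝ => Real.exp (-s)) (nhds 0) (nhds 1) := by
    have : ContinuousAt (fun s : ℝ => Real.exp (-s)) 0 := by fun_prop
    rw [ContinuousAt, neg_zero, Real.exp_zero] at this; exact this
  rcases lt_trichotomy ξ 0 with hξ | hξ | hξ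
  · -- ξ < 0 : eventually 1
    have hξ' : ξ ≠ 0 := ne_of_lt hξ
    set x₀ := μ - σ / ξ with hx₀
    have hslope : ∀ x, 1 + ξ * (x - μ) / σ = (ξ / σ) * (x - x₀) := gev_slope μ σ hξ' hσ.ne'
    have hsneg : ξ / σ < 0 := div_neg_of_neg_of_pos hξ hσ
    apply Tendsto.congr' _ tendsto_const_nhds
    filter_upwards [eventually_gt_atTop x₀] with x (hx : x₀ < x)
    have hneg : ¬ (0 < 1 + ξ * (x - μ) / σ) := by
      rw [hslope, not_lt]
      exact mul_nonpos_of_nonpos_of_nonneg hsneg.le (by linarith)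
    simp [GEVcdf, hξ', if_neg hneg, not_lt.2 hξ.le]
  · subst hξ
    have h1 : Tendsto (fun x : ℝ => -(x - μ) / σ) atTop atBot := by
      apply Tendsto.atBot_div_const hσ
      exact tendsto_neg_atTop_atBot.comp (tendsto_atTop_add_const_right _ (-μ) tendsto_id)
    have hmain : Tendsto (fun x : ℝ => Real.exp (-Real.exp (-(x - μ) / σ))) atTop (nhds 1) :=
      hexp1.comp (Real.tendsto_exp_atBot.comp h1)
    apply hmain.congr
    intro x; simp [GEVcdf]
  · -- ξ > 0
    have hξ' : ξ ≠ 0 := ne_of_gt hξ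
    set x₀ := μ - σ / ξ with hx₀
    have hslope : ∀ x, 1 + ξ * (x - μ) / σ = (ξ / σ) * (x - x₀) := gev_slope μ σ hξ' hσ.ne'
    have hspos : 0 < ξ / σ := div_pos hξ hσ
    have hgtop : Tendsto (fun x : ℝ => 1 + ξ * (x - μ) / σ) atTop atTop := by
      apply Tendsto.congr (fun x => (hslope x).symm)
      exact (tendsto_atTop_add_const_right _ (-x₀) tendsto_id).const_mul_atTop hspos
    have hrp : Tendsto (fun t : ℝ => t ^ (-1/ξ)) atTop (nhds 0) := by
      have := tendsto_rpow_neg_atTop (y := 1/ξ) (by positivity)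
      simpa [neg_div] using this
    have hmain : Tendsto (fun x : ℝ => Real.exp (-(1 + ξ * (x - μ) / σ) ^ (-1 / ξ)))
        atTop (nhds 1) := hexp1.comp (hrp.comp hgtop)
    apply hmain.congr'
    filter_upwards [eventually_gt_atTop x₀] with x (hx : x₀ < x)
    have hpos : 0 < 1 + ξ * (x - μ) / σ := by
      rw [hslope]; exact mul_pos hspos (by linarith)
    simp [GEVcdf, hξ', if_pos hpos]

private lemma gev_affine {ξ μ σ : ℝ} (hσ : 0 < σ) {c : ℝ} (d : ℝ) (hc : 0 < c) (x : ℝ) :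
    GEVcdf ξ μ σ (c * x + d) = GEVcdf ξ ((μ - d) / c) (σ / c) x := by
  have e1 : ξ * (x - (μ - d) / c) / (σ / c) = ξ * (c * x + d - μ) / σ := by
    rcases eq_or_ne ξ 0 with h | h
    · simp [h]
    · field_simp
      ring
  have e2 : -(x - (μ - d) / c) / (σ / c) = -(c * x + d - μ) / σ := by
    field_simp; ring
  simp only [GEVcdf]
  rw [e1, e2]

private lemma fL_tendsto {F H : ℝ → ℝ} {cs0 ds0 : ℕ → ℝ} {r : ℕ → ℝ}
    (hF0 : ∀ x, 0 ≤ F x)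
    (hMDA : ∀ x, Tendsto (fun n => F (cs0 n * x + ds0 n) ^ n) atTop (nhds (H x)))
    (hr : ∀ n, 0 < r n) (hrtop : Tendsto r atTop atTop) (y : ℝ) :
    Tendsto (fun n => F (cs0 (max 1 ⌊r n⌋₊) * y + ds0 (max 1 ⌊r n⌋₊)) ^ (r n)) atTop
      (nhds (H y)) := by
  set m : ℕ → ℕ := fun n => max 1 ⌊r n⌋₊ with hm
  have hm1 : ∀ n, 1 ≤ m n := fun n => le_max_left _ _
  have hmpos : ∀ n, (0:ℝ) < (m n : ℝ) := fun n => by exact_mod_cast (hm1 n)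
  have hmtop : Tendsto m atTop atTop :=
    tendsto_atTop_mono (fun n => le_max_right _ _) (tendsto_nat_floor_atTop.comp hrtop)
  have hQ : Tendsto (fun n => F (cs0 (m n) * y + ds0 (m n)) ^ (m n)) atTop (nhds (H y)) :=
    (hMDA y).comp hmtop
  have hev1 : ∀ᶠ n in atTop, (1:ℝ) ≤ r n := hrtop.eventually (eventually_ge_atTop 1)
  have he : Tendsto (fun n => r n / (m n : ℝ)) atTop (nhds 1) := by
    have hup : Tendsto (fun n => 1 + ((m n : ℝ))⁻¹) atTop (nhds 1) := by
      have : Tendsto (fun n => ((m n : ℝ))⁻¹) atTop (nhds 0) :=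
        (tendsto_natCast_atTop_atTop.comp hmtop).inv_tendsto_atTop
      simpa using (this.const_add 1)
    apply tendsto_of_tendsto_of_tendsto_of_le_of_le' tendsto_const_nhds hup
    · filter_upwards [hev1] with n hn
      have hmeq : m n = ⌊r n⌋₊ := max_eq_right (Nat.le_floor (by exact_mod_cast hn))
      have : (m n : ℝ) ≤ r n := by rw [hmeq]; exact Nat.floor_le (by linarith)
      rw [le_div_iff₀ (hmpos n), one_mul]; exact this
    · filter_upwards [hev1] with n hn
      have hmeq : m n = ⌊r n⌋₊ := max_eq_right (Nat.le_floor (by exact_mod_cast hn))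
      have hlt : r n < (m n : ℝ) + 1 := by
        rw [hmeq]; exact_mod_cast Nat.lt_floor_add_one (r n)
      rw [div_le_iff₀ (hmpos n)]
      have : (1 + ((m n:ℝ))⁻¹) * (m n : ℝ) = (m n : ℝ) + 1 := by
        rw [add_mul, inv_mul_cancel₀ (hmpos n).ne', one_mul, add_comm]
      rw [this]; exact hlt.le
  have hpair : Tendsto (fun n => ((F (cs0 (m n) * y + ds0 (m n)) ^ (m n) : ℝ), r n / (m n : ℝ)))
      atTop (nhds (H y, 1)) := hQ.prodMk_nhds he
  have hmain := (Real.continuousAt_rpow (H y, 1) (Or.inr one_pos)).tendsto.comp hpair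
  simp only [Real.rpow_one] at hmain
  apply hmain.congr'
  filter_upwards [] with n
  simp only [Function.comp]
  rw [← Real.rpow_natCast (F (cs0 (m n) * y + ds0 (m n))) (m n), ← Real.rpow_mul (hF0 _)]
  congr 1
  rw [mul_comm, div_mul_cancel₀ _ (hmpos n).ne']

private lemma dense_contAt {G : ℝ → ℝ} (hmono : Monotone G) :
    Dense {x : ℝ | ContinuousAt G x} := by
  have h := hmono.countable_not_continuousAt
  have := h.dense_compl ℝ
  simpa [compl_setOf, not_not] using this

private lemma choose_pts {G : ℝ → ℝ} (hG : IsDistFun G) (hGnd : ¬ IsDegenerateDF G) :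
    ∃ y1 y2 : ℝ, y1 < y2 ∧ ContinuousAt G y1 ∧ ContinuousAt G y2 ∧
      0 < G y1 ∧ G y2 < 1 := by
  obtain ⟨hmono, hrc, hbot, htop, hIcc⟩ := hG
  -- first: ∃ z, 0 < G z < 1
  have hz : ∃ z, 0 < G z ∧ G z < 1 := by
    by_contra hcon
    push_neg at hcon
    have h01 : ∀ x, G x = 0 ∨ G x = 1 := by
      intro x
      rcases lt_or_ge 0 (G x) with h | h
      · exact Or.inr (le_antisymm (hIcc x).2 (hcon x h))
      · exact Or.inl (le_antisymm h (hIcc x).1)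
    have hS1 : ∃ x, G x = 1 := by
      obtain ⟨x, hx⟩ := (htop.eventually (eventually_gt_nhds (by norm_num : (1:ℝ)/2 < 1))).exists
      rcases h01 x with h | h
      · rw [h] at hx; norm_num at hx
      · exact ⟨x, h⟩
    have hS0 : ∃ x, G x = 0 := by
      obtain ⟨x, hx⟩ := (hbot.eventually (eventually_lt_nhds (by norm_num : (0:ℝ) < 1/2))).exists
      rcases h01 x with h | h
      · exact ⟨x, h⟩
      · rw [h] at hx; norm_num at hx
    obtain ⟨x₀, hx₀⟩ := hS0
    have hbdd : BddBelow {x | G x = 1} := by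
      refine ⟨x₀, fun y hy => ?_⟩
      by_contra hlt
      push_neg at hlt
      have := hmono hlt.le
      rw [hy, hx₀] at this; norm_num at this
    set a := sInf {x | G x = 1} with ha
    apply hGnd
    refine ⟨a, fun x => ?_⟩
    rcases lt_trichotomy x a with h | h | h
    · rw [if_neg (by linarith)]
      have hx : G x ≠ 1 := by
        intro hx1
        exact absurd (csInf_le hbdd hx1) (not_le.2 h)
      rcases h01 x with h' | h'
      · exact h'
      · exact absurd h' hx
    · rw [if_pos h.ge]
      -- right continuity: G x = 1 since G = 1 on (x, ∞)
      have h1 : ∀ y, x < y → G y = 1 := by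
        intro y hy
        obtain ⟨w, hw, hwy⟩ := (csInf_lt_iff hbdd hS1).1 (h ▸ hy)
        have := hmono hwy.le
        rw [hw] at this
        exact le_antisymm (hIcc y).2 this
      have hten : Tendsto G (nhdsWithin x (Ioi x)) (nhds (G x)) :=
        (hrc x).mono_left (nhdsWithin_mono x Ioi_subset_Ici_self)
      have hconst : Tendsto G (nhdsWithin x (Ioi x)) (nhds 1) := by
        apply Tendsto.congr' _ tendsto_const_nhds
        filter_upwards [self_mem_nhdsWithin] with y (hy : x < y)
        exact (h1 y hy).symm
      exact tendsto_nhds_unique hten hconst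
    · rw [if_pos h.le]
      obtain ⟨w, hw, hwx⟩ := (csInf_lt_iff hbdd hS1).1 h
      have := hmono hwx.le
      rw [hw] at this
      exact le_antisymm (hIcc x).2 this
  obtain ⟨z, hz0, hz1⟩ := hz
  -- right-continuity at z: G < 1 on [z, z+ε)
  have hev : ∀ᶠ y in nhdsWithin z (Ici z), G y < 1 := (hrc z).eventually (eventually_lt_nhds hz1)
  obtain ⟨ε, hε, hball⟩ := Metric.mem_nhdsWithin_iff.1 hev
  have hdense := dense_contAt hmono
  obtain ⟨y1, hy1c, hy1⟩ := hdense.exists_between (show z < z + ε/2 by linarith)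
  obtain ⟨y2, hy2c, hy2⟩ := hdense.exists_between (show y1 < z + ε/2 from hy1.2)
  refine ⟨y1, y2, hy2.1, hy1c, hy2c, lt_of_lt_of_le hz0 (hmono hy1.1.le), ?_⟩
  have hy2mem : y2 ∈ Metric.ball z ε ∩ Ici z := by
    constructor
    · rw [Metric.mem_ball, Real.dist_eq, abs_of_pos (by linarith [hy1.1, hy2.1] : 0 < y2 - z)]
      linarith [hy2.2]
    · exact le_of_lt (lt_trans hy1.1 hy2.1)
  exact hball hy2mem

/-- Corollary: generalized Fisher–Tippett–Gnedenko theorem. -/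
theorem generalized_FTG_corollary
    (F D G : ℝ → ℝ) (ξ μ σ : ℝ) (hσ : 0 < σ)
    (cs0 ds0 cs ds : ℕ → ℝ) (δ : ℕ → ℝ → ℝ) (r : ℕ → ℝ)
    (hF : IsDistFun F) (hFcont : Continuous F)
    (hcs0 : ∀ n, 0 < cs0 n)
    (hMDA : ∀ x, Tendsto (fun n => F (cs0 n * x + ds0 n) ^ n) atTop
      (nhds (GEVcdf ξ μ σ x)))
    (hδ : ∀ n, IsCopulaDiagonal n (δ n))
    (hr : ∀ n, 0 < r n) (hrtop : Tendsto r atTop atTop)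
    (hDcont : ContinuousOn D (Icc 0 1))
    (hconv : ∀ u ∈ Icc (0:ℝ) 1,
      Tendsto (fun n => δ n (u ^ (1 / r n))) atTop (nhds (D u)))
    (hcs : ∀ n, 0 < cs n)
    (hG : IsDistFun G) (hGnd : ¬ IsDegenerateDF G)
    (hGconv : ∀ x, ContinuousAt G x →
      Tendsto (fun n => δ n (F (cs n * x + ds n))) atTop (nhds (G x))) :
    ∃ c d : ℝ, 0 < c ∧ ∀ x, G x = D (GEVcdf ξ ((μ - d) / c) (σ / c) x) := by
  obtain ⟨hFmono, hFrc, hFbot, hFtop, hFIcc⟩ := hF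
  obtain ⟨hGmono, hGrc, hGbot, hGtop, hGIcc⟩ := hG
  set H : ℝ → ℝ := GEVcdf ξ μ σ with hH
  have hHcont : Continuous H := gev_continuous hσ
  have hHbot : Tendsto H atBot (nhds 0) := gev_tendsto_atBot hσ
  have hHtop : Tendsto H atTop (nhds 1) := gev_tendsto_atTop hσ
  have hHIcc : ∀ x, H x ∈ Icc (0:ℝ) 1 := gev_mem_Icc ξ μ σ
  -- clamp function
  set cl : ℝ → ℝ := fun u => max 0 (min 1 u) with hcldef
  have hclmem : ∀ u, cl u ∈ Icc (0:ℝ) 1 :=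
    fun u => ⟨le_max_left _ _, max_le zero_le_one (min_le_left _ _)⟩
  have hclid : ∀ u ∈ Icc (0:ℝ) 1, cl u = u := by
    intro u hu
    simp only [hcldef, min_eq_right hu.2, max_eq_right hu.1]
  have hclcont : Continuous cl := by fun_prop
  have hclmono : Monotone cl := fun u v huv => max_le_max le_rfl (min_le_min le_rfl huv)
  set Dc : ℝ → ℝ := fun u => D (cl u) with hDcdef
  have hDcCont : Continuous Dc := hDcont.comp_continuous hclcont hclmem
  have hD0 : D 0 = 0 := by
    have h := hconv 0 (by simp)
    have h2 : Tendsto (fun n => δ n ((0:ℝ) ^ (1 / r n))) atTop (nhds 0) := by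
      apply tendsto_const_nhds.congr
      intro n
      rw [Real.zero_rpow (one_div_ne_zero (hr n).ne')]
      exact ((hδ n).1).symm
    exact tendsto_nhds_unique h h2
  have hD1 : D 1 = 1 := by
    have h := hconv 1 (by simp)
    have h2 : Tendsto (fun n => δ n ((1:ℝ) ^ (1 / r n))) atTop (nhds 1) := by
      apply tendsto_const_nhds.congr
      intro n
      rw [Real.one_rpow]
      exact ((hδ n).2.1).symm
    exact tendsto_nhds_unique h h2
  -- fD family
  set fD : ℕ → ℝ → ℝ := fun n u => δ n ((cl u) ^ (1 / r n)) with hfDdef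
  have hrpmem : ∀ n u, (cl u) ^ (1 / r n) ∈ Icc (0:ℝ) 1 := fun n u =>
    ⟨Real.rpow_nonneg (hclmem u).1 _,
      Real.rpow_le_one (hclmem u).1 (hclmem u).2 (one_div_nonneg.2 (hr n).le)⟩
  have hfDmono : ∀ n, Monotone (fD n) := by
    intro n u v huv
    exact (hδ n).2.2.1 (hrpmem n u) (hrpmem n v)
      (Real.rpow_le_rpow (hclmem u).1 (hclmono huv) (one_div_nonneg.2 (hr n).le))
  have hfDlim : ∀ u, Tendsto (fun n => fD n u) atTop (nhds (Dc u)) :=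
    fun u => hconv (cl u) (hclmem u)
  -- fL family
  set m : ℕ → ℕ := fun n => max 1 ⌊r n⌋₊ with hmdef
  set a : ℕ → ℝ := fun n => cs0 (m n) with hadef
  set b : ℕ → ℝ := fun n => ds0 (m n) with hbdef
  have ha : ∀ n, 0 < a n := fun n => hcs0 _
  set fL : ℕ → ℝ → ℝ := fun n y => F (a n * y + b n) ^ (r n) with hfLdef
  have hfLmono : ∀ n, Monotone (fL n) := by
    intro n u v huv
    exact Real.rpow_le_rpow (hFIcc _).1
      (hFmono (by nlinarith [ha n] : a n * u + b n ≤ a n * v + b n)) (hr n).le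
  have hfLlim : ∀ y, Tendsto (fun n => fL n y) atTop (nhds (H y)) :=
    fun y => fL_tendsto (fun x => (hFIcc x).1) hMDA hr hrtop y
  -- affine reparametrization
  set ψ : ℕ → ℝ → ℝ := fun n x => (cs n * x + ds n - b n) / a n with hψdef
  have hψaff : ∀ n x, a n * ψ n x + b n = cs n * x + ds n := by
    intro n x
    simp only [hψdef]
    rw [mul_comm, div_mul_cancel₀ _ (ha n).ne']
    ring
  set α : ℕ → ℝ := fun n => cs n / a n with hαdef
  set β : ℕ → ℝ := fun n => (ds n - b n) / a n with hβdef
  have hαpos : ∀ n, 0 < α n := fun n => div_pos (hcs n) (ha n)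
  have hψab : ∀ n x, ψ n x = α n * x + β n := by
    intro n x
    simp only [hψdef, hαdef, hβdef]
    ring
  -- key pointwise identity
  have hkey : ∀ n x, δ n (F (cs n * x + ds n)) = fD n (fL n (ψ n x)) := by
    intro n x
    have hFv := hFIcc (cs n * x + ds n)
    have h1 : fL n (ψ n x) = F (cs n * x + ds n) ^ (r n) := by
      simp only [hfLdef]
      rw [hψaff]
    rw [h1]
    have hmem : F (cs n * x + ds n) ^ (r n) ∈ Icc (0:ℝ) 1 :=
      ⟨Real.rpow_nonneg hFv.1 _, Real.rpow_le_one hFv.1 hFv.2 (hr n).le⟩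
    simp only [hfDdef]
    rw [hclid _ hmem, ← Real.rpow_mul hFv.1, mul_one_div_cancel (hr n).ne', Real.rpow_one]
  have hGconv' : ∀ x, ContinuousAt G x →
      Tendsto (fun n => fD n (fL n (ψ n x))) atTop (nhds (G x)) := by
    intro x hx
    exact (hGconv x hx).congr (fun n => hkey n x)
  -- choose continuity points with nontrivial values
  obtain ⟨y1, y2, hy12, hy1c, hy2c, hGy1, hGy2⟩ :=
    choose_pts ⟨hGmono, hGrc, hGbot, hGtop, hGIcc⟩ hGnd
  -- choose x', x''
  have hDc0 : Dc 0 = 0 := by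
    simp only [hDcdef]
    rw [hclid 0 ⟨le_rfl, zero_le_one⟩, hD0]
  have hDc1 : Dc 1 = 1 := by
    simp only [hDcdef]
    rw [hclid 1 ⟨zero_le_one, le_rfl⟩, hD1]
  have hDcHbot : Tendsto (fun t => Dc (H t)) atBot (nhds 0) := by
    have := (hDcCont.continuousAt (x := 0)).tendsto.comp hHbot
    rwa [hDc0] at this
  have hDcHtop : Tendsto (fun t => Dc (H t)) atTop (nhds 1) := by
    have := (hDcCont.continuousAt (x := 1)).tendsto.comp hHtop
    rwa [hDc1] at this
  obtain ⟨x', hx'⟩ := (hDcHbot.eventually (eventually_lt_nhds hGy1)).exists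
  obtain ⟨x'', hx''⟩ := (hDcHtop.eventually (eventually_gt_nhds hGy2)).exists
  -- eventual inequalities
  have hlow : ∀ᶠ n in atTop, x' < ψ n y1 := by
    have t1 : Tendsto (fun n => fD n (fL n x')) atTop (nhds (Dc (H x'))) :=
      lemA hfDmono hfDlim hDcCont.continuousAt (hfLlim x')
    have t2 := hGconv' y1 hy1c
    filter_upwards [t1.eventually_lt t2 hx'] with n hn
    by_contra hcon
    push_neg at hcon
    exact absurd (hfDmono n (hfLmono n hcon)) (not_le.2 hn)
  have hhigh : ∀ᶠ n in atTop, ψ n y2 < x'' := by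
    have t1 : Tendsto (fun n => fD n (fL n x'')) atTop (nhds (Dc (H x''))) :=
      lemA hfDmono hfDlim hDcCont.continuousAt (hfLlim x'')
    have t2 := hGconv' y2 hy2c
    filter_upwards [t2.eventually_lt t1 hx''] with n hn
    by_contra hcon
    push_neg at hcon
    exact absurd (hfDmono n (hfLmono n hcon)) (not_le.2 hn)
  -- boundedness
  have hψmono : ∀ n, ψ n y1 ≤ ψ n y2 := by
    intro n
    rw [hψab n y1, hψab n y2]
    have := (hαpos n).le
    nlinarith [hy12]
  obtain ⟨N, hN⟩ := eventually_atTop.1 (hlow.and hhigh)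
  have hx'x'' : x' < x'' := by
    obtain ⟨h1, h2⟩ := hN N le_rfl
    exact lt_of_lt_of_le h1 (le_of_lt (lt_of_le_of_lt (hψmono N) h2))
  set M : ℝ := (x'' - x') / (y2 - y1) with hMdef
  have hMpos : 0 < M := div_pos (by linarith) (by linarith)
  have hαbd : ∀ n ≥ N, α n ∈ Icc (0:ℝ) M := by
    intro n hn
    obtain ⟨h1, h2⟩ := hN n hn
    refine ⟨(hαpos n).le, ?_⟩
    have hd : α n * (y2 - y1) ≤ x'' - x' := by
      have e1 := hψab n y1
      have e2 := hψab n y2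
      nlinarith
    rw [hMdef, le_div_iff₀ (by linarith : (0:ℝ) < y2 - y1)]
    exact hd
  set R : ℝ := max |x'| |x''| + M * |y1| with hRdef
  have hβbd : ∀ n ≥ N, β n ∈ Icc (-R) R := by
    intro n hn
    obtain ⟨h1, h2⟩ := hN n hn
    have hψ1 : x' < ψ n y1 := h1
    have hψ2 : ψ n y1 < x'' := lt_of_le_of_lt (hψmono n) h2
    have hb : β n = ψ n y1 - α n * y1 := by rw [hψab n y1]; ring
    have hαy : |α n * y1| ≤ M * |y1| := by
      rw [abs_mul, abs_of_nonneg (hαpos n).le]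
      exact mul_le_mul_of_nonneg_right ((hαbd n hn).2) (abs_nonneg _)
    have hψabs : |ψ n y1| ≤ max |x'| |x''| := by
      rw [abs_le]
      constructor
      · calc -(max |x'| |x''|) ≤ -|x'| := by simp [le_max_left]
          _ ≤ x' := neg_abs_le _
          _ ≤ ψ n y1 := hψ1.le
      · calc ψ n y1 ≤ x'' := hψ2.le
          _ ≤ |x''| := le_abs_self _
          _ ≤ max |x'| |x''| := le_max_right _ _
    rw [hb]
    have := abs_sub_abs_le_abs_sub (ψ n y1) (α n * y1)
    constructor
    · have : -(R) ≤ -(|ψ n y1 - α n * y1|) → True := fun _ => trivial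
      have h3 : |ψ n y1 - α n * y1| ≤ R := by
        calc |ψ n y1 - α n * y1| ≤ |ψ n y1| + |α n * y1| := abs_sub _ _
          _ ≤ max |x'| |x''| + M * |y1| := add_le_add hψabs hαy
      linarith [neg_abs_le (ψ n y1 - α n * y1), abs_nonneg (ψ n y1 - α n * y1), h3]
    · have h3 : |ψ n y1 - α n * y1| ≤ R := by
        calc |ψ n y1 - α n * y1| ≤ |ψ n y1| + |α n * y1| := abs_sub _ _
          _ ≤ max |x'| |x''| + M * |y1| := add_le_add hψabs hαy
      linarith [le_abs_self (ψ n y1 - α n * y1)]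
  -- Bolzano–Weierstrass, twice
  obtain ⟨c, hcmem, φ1, hφ1, hαconv⟩ :=
    tendsto_subseq_of_bounded (Metric.isBounded_Icc (0:ℝ) M)
      (x := fun k => α (N + k)) (fun k => hαbd (N + k) (Nat.le_add_right N k))
  obtain ⟨d, hdmem, φ2, hφ2, hβconv⟩ :=
    tendsto_subseq_of_bounded (Metric.isBounded_Icc (-R) R)
      (x := fun k => β (N + φ1 k)) (fun k => hβbd (N + φ1 k) (Nat.le_add_right _ _))
  have hc0 : 0 ≤ c := by
    rw [isClosed_Icc.closure_eq] at hcmem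
    exact hcmem.1
  set ι : ℕ → ℕ := fun k => N + φ1 (φ2 k) with hιdef
  have hιmono : StrictMono ι := fun i j hij => by
    simp only [hιdef]
    exact Nat.add_lt_add_left (hφ1 (hφ2 hij)) N
  have hιtop : Tendsto ι atTop atTop := hιmono.tendsto_atTop
  have hαι : Tendsto (fun k => α (ι k)) atTop (nhds c) := by
    have := hαconv.comp hφ2.tendsto_atTop
    exact this
  have hβι : Tendsto (fun k => β (ι k)) atTop (nhds d) := hβconv
  -- limit of ψ along the subsequence
  have hψlim : ∀ x, Tendsto (fun k => ψ (ι k) x) atTop (nhds (c * x + d)) := by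
    intro x
    have h1 : Tendsto (fun k => α (ι k) * x + β (ι k)) atTop (nhds (c * x + d)) :=
      (hαι.mul_const x).add hβι
    exact h1.congr (fun k => (hψab (ι k) x).symm)
  have hDH : ∀ x, Tendsto (fun k => fD (ι k) (fL (ι k) (ψ (ι k) x)))
      atTop (nhds (Dc (H (c * x + d)))) := by
    intro x
    have hKl : Tendsto (fun k => fL (ι k) (ψ (ι k) x)) atTop (nhds (H (c * x + d))) :=
      lemA (f := fun k => fL (ι k)) (fun k => hfLmono (ι k))
        (fun y => (hfLlim y).comp hιtop) hHcont.continuousAt (hψlim x)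
    exact lemA (f := fun k => fD (ι k)) (fun k => hfDmono (ι k))
      (fun u => (hfDlim u).comp hιtop) hDcCont.continuousAt hKl
  have hGeq : ∀ x, ContinuousAt G x → G x = Dc (H (c * x + d)) := by
    intro x hx
    exact tendsto_nhds_unique ((hGconv' x hx).comp hιtop) (hDH x)
  -- c > 0
  have hcpos : 0 < c := by
    rcases hc0.lt_or_eq with h | h
    · exact h
    · exfalso
      have hκ : ∀ x, ContinuousAt G x → G x = Dc (H d) := by
        intro x hx
        have := hGeq x hx
        rwa [← h, zero_mul, zero_add] at this
      have hκ1 : 0 < Dc (H d) := by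
        rw [← hκ y1 hy1c]; exact hGy1
      obtain ⟨xm, hxm⟩ := (hGbot.eventually (eventually_lt_nhds hκ1)).exists
      obtain ⟨ym, hymc, hym⟩ := (dense_contAt hGmono).exists_between
        (show xm - 1 < xm by linarith)
      have h1 : G ym = Dc (H d) := hκ ym hymc
      have h2 : G ym ≤ G xm := hGmono hym.2.le
      linarith
  -- extension to all x
  have hWcont : Continuous (fun x => Dc (H (c * x + d))) := by
    apply hDcCont.comp
    apply hHcont.comp
    fun_prop
  have hall : ∀ x, G x = Dc (H (c * x + d)) := by
    intro x
    choose yk hykc hyk using fun k : ℕ =>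
      (dense_contAt hGmono).exists_between (lt_add_of_pos_right x (by positivity : (0:ℝ) < 1/((k:ℝ)+1)))
    have hupper : Tendsto (fun k : ℕ => x + 1/((k:ℝ)+1)) atTop (nhds x) := by
      have := tendsto_one_div_add_atTop_nhds_zero_nat (𝕜 := ℝ)
      have h2 := this.const_add x
      simpa using h2
    have hyktend : Tendsto yk atTop (nhds x) :=
      tendsto_of_tendsto_of_tendsto_of_le_of_le tendsto_const_nhds hupper
        (fun k => (hyk k).1.le) (fun k => (hyk k).2.le)
    have h1 : Tendsto (fun k => G (yk k)) atTop (nhds (G x)) := by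
      apply (hGrc x).tendsto.comp
      rw [tendsto_nhdsWithin_iff]
      exact ⟨hyktend, Eventually.of_forall fun k => (hyk k).1.le⟩
    have h2 : Tendsto (fun k => G (yk k)) atTop (nhds (Dc (H (c * x + d)))) := by
      have h3 : Tendsto (fun k => Dc (H (c * yk k + d))) atTop (nhds (Dc (H (c * x + d)))) :=
        (hWcont.continuousAt.tendsto).comp hyktend
      apply h3.congr
      intro k
      exact (hGeq (yk k) (hykc k)).symm
    exact tendsto_nhds_unique h1 h2
  refine ⟨c, d, hcpos, fun x => ?_⟩
  rw [hall x]
  simp only [hDcdef]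
  rw [hclid _ (hHIcc (c * x + d)), hH, gev_affine hσ d hcpos x]
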